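/- Let ℓ be a positive integer and let S be an ℓ-sparse finite collection of bundles of Fin m. Then the function v_S^ℓ is normalized (v_S^ℓ(∅) = 0), monotone (v_S^ℓ(X) ≤ v_S^ℓ(Y) whenever X ⊆ Y), and subadditive (v_S^ℓ(X ∪ Y) ≤ v_S^ℓ(X) + v_S^ℓ(Y) for all bundles X, Y). -/
import Mathlib

/-- A collection of bundles of `Fin m`, indexed by `ι`, is `ℓ`-sparse if the union of any
`ℓ - 1` (not necessarily distinct) members is not all of `Fin m`. -/
def Sparse (m ℓ : ℕ) {ι : Type*} (S : ι → Finset (Fin m)) : Prop :=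
  ∀ g : Fin (ℓ - 1) → ι,
    (Finset.univ.sup fun t => S (g t)) ≠ (Finset.univ : Finset (Fin m))

/-- The cover number `σ_S(X)`: the least number of members of the collection `S` needed to
cover `X`, if `X` is contained in the union of all members, and `max ℓ d` otherwise (where
`d` is the number of members). -/
noncomputable def coverNum (m ℓ : ℕ) {ι : Type*} [Fintype ι]
    (S : ι → Finset (Fin m)) (X : Finset (Fin m)) : ℕ :=
  if X ⊆ Finset.univ.sup S then
    sInf {n | ∃ Y : Finset ι, X ⊆ Y.sup S ∧ Y.card = n}
  else max ℓ (Fintype.card ι)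

/-- The modified set-cover valuation `v_S^ℓ`. -/
noncomputable def vSl (m ℓ : ℕ) {ι : Type*} [Fintype ι]
    (S : ι → Finset (Fin m)) (X : Finset (Fin m)) : ℝ :=
  if (coverNum m ℓ S X : ℝ) < (ℓ : ℝ) / 2 then (coverNum m ℓ S X : ℝ)
  else if (coverNum m ℓ S Xᶜ : ℝ) < (ℓ : ℝ) / 2 then (ℓ : ℝ) - (coverNum m ℓ S Xᶜ : ℝ)
  else (ℓ : ℝ) / 2

set_option maxHeartbeats 1000000 in
lemma key_arith (L a a' b b' u u' : ℝ)
    (hL : 0 ≤ L) (h0a : 0 ≤ a) (h0b : 0 ≤ b) (h0u' : 0 ≤ u')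
    (hsa : L ≤ a + a') (hsb : L ≤ b + b')
    (hsub : u ≤ a + b) (hA : a' ≤ u' + b) (hB : b' ≤ u' + a) :
    min u (max (L - u') (L / 2)) ≤
      min a (max (L - a') (L / 2)) + min b (max (L - b') (L / 2)) := by
  simp only [min_def, max_def]
  split_ifs <;> linarith

section
variable {m ℓ d : ℕ} {S : Fin d → Finset (Fin m)}

lemma coverNum_le_card {X : Finset (Fin m)} {Y : Finset (Fin d)}
    (h : X ⊆ Y.sup S) : coverNum m ℓ S X ≤ Y.card := by
  have hX : X ⊆ Finset.univ.sup S := h.trans (Finset.sup_mono (Finset.subset_univ Y))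
  rw [coverNum, if_pos hX]
  exact Nat.sInf_le ⟨Y, h, rfl⟩

lemma exists_cover {X : Finset (Fin m)} (hX : X ⊆ Finset.univ.sup S) :
    ∃ Y : Finset (Fin d), X ⊆ Y.sup S ∧ Y.card = coverNum m ℓ S X := by
  rw [coverNum, if_pos hX]
  have hne : {n | ∃ Y : Finset (Fin d), X ⊆ Y.sup S ∧ Y.card = n}.Nonempty :=
    ⟨Finset.univ.card, Finset.univ, hX, rfl⟩
  exact Nat.sInf_mem hne

lemma coverNum_not_covered {X : Finset (Fin m)} (hX : ¬ X ⊆ Finset.univ.sup S) :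
    coverNum m ℓ S X = max ℓ d := by
  rw [coverNum, if_neg hX, Fintype.card_fin]

lemma coverNum_le_max (X : Finset (Fin m)) : coverNum m ℓ S X ≤ max ℓ d := by
  by_cases hX : X ⊆ Finset.univ.sup S
  · have := coverNum_le_card (ℓ := ℓ) hX
    simp only [Finset.card_univ, Fintype.card_fin] at this
    exact this.trans (le_max_right _ _)
  · rw [coverNum_not_covered hX]

lemma coverNum_mono {X Y : Finset (Fin m)} (h : X ⊆ Y) :
    coverNum m ℓ S X ≤ coverNum m ℓ S Y := by
  by_cases hY : Y ⊆ Finset.univ.sup S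
  · obtain ⟨A, hA, hcA⟩ := exists_cover (ℓ := ℓ) hY
    exact hcA ▸ coverNum_le_card (h.trans hA)
  · rw [coverNum_not_covered hY]
    exact coverNum_le_max X

lemma coverNum_union_le {X Y Z : Finset (Fin m)} (h : X ⊆ Y ∪ Z) :
    coverNum m ℓ S X ≤ coverNum m ℓ S Y + coverNum m ℓ S Z := by
  by_cases hY : Y ⊆ Finset.univ.sup S
  · by_cases hZ : Z ⊆ Finset.univ.sup S
    · obtain ⟨A, hA, hcA⟩ := exists_cover (ℓ := ℓ) hY
      obtain ⟨B, hB, hcB⟩ := exists_cover (ℓ := ℓ) hZ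
      have hcov : X ⊆ (A ∪ B).sup S := by
        intro x hx
        rcases Finset.mem_union.1 (h hx) with hx' | hx'
        · exact Finset.le_iff_subset.mp
            (Finset.sup_mono (Finset.subset_union_left (s₂ := B))) (hA hx')
        · exact Finset.le_iff_subset.mp
            (Finset.sup_mono (Finset.subset_union_right (s₁ := A))) (hB hx')
      calc coverNum m ℓ S X ≤ (A ∪ B).card := coverNum_le_card hcov
        _ ≤ A.card + B.card := Finset.card_union_le A B
        _ = _ := by rw [hcA, hcB]
    · have h1 : coverNum m ℓ S X ≤ max ℓ d := coverNum_le_max X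
      have h2 : coverNum m ℓ S Z = max ℓ d := coverNum_not_covered hZ
      omega
  · have h1 : coverNum m ℓ S X ≤ max ℓ d := coverNum_le_max X
    have h2 : coverNum m ℓ S Y = max ℓ d := coverNum_not_covered hY
    omega

lemma sparse_bound (hm : 0 < m) (hS : Sparse m ℓ S) (X : Finset (Fin m)) :
    ℓ ≤ coverNum m ℓ S X + coverNum m ℓ S Xᶜ := by
  by_cases hX : X ⊆ Finset.univ.sup S
  · by_cases hXc : Xᶜ ⊆ Finset.univ.sup S
    · obtain ⟨A, hA, hcA⟩ := exists_cover (ℓ := ℓ) hX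
      obtain ⟨B, hB, hcB⟩ := exists_cover (ℓ := ℓ) hXc
      by_contra hcon
      push_neg at hcon
      have hcard : (A ∪ B).card ≤ ℓ - 1 := by
        have := Finset.card_union_le A B
        omega
      have hcover : (Finset.univ : Finset (Fin m)) ⊆ (A ∪ B).sup S := by
        intro x _
        by_cases hx : x ∈ X
        · exact Finset.le_iff_subset.mp
            (Finset.sup_mono (Finset.subset_union_left (s₂ := B))) (hA hx)
        · exact Finset.le_iff_subset.mp
            (Finset.sup_mono (Finset.subset_union_right (s₁ := A)))
            (hB (Finset.mem_compl.2 hx))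
      rcases (A ∪ B).eq_empty_or_nonempty with hCe | ⟨i0, hi0⟩
      · rw [hCe] at hcover
        simp only [Finset.sup_empty, Finset.bot_eq_empty] at hcover
        have := hcover (Finset.mem_univ (⟨0, hm⟩ : Fin m))
        simp at this
      · apply hS (fun t => (A ∪ B).toList.getD t i0)
        apply Finset.eq_univ_of_forall
        intro x
        have hx := hcover (Finset.mem_univ x)
        rw [Finset.mem_sup] at hx
        obtain ⟨i, hiC, hxi⟩ := hx
        have hmem : i ∈ (A ∪ B).toList := Finset.mem_toList.2 hiC
        have hlt : (A ∪ B).toList.idxOf i < (A ∪ B).toList.length :=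
          List.idxOf_lt_length_iff.2 hmem
        have hlen : (A ∪ B).toList.length = (A ∪ B).card := Finset.length_toList _
        have hlt' : (A ∪ B).toList.idxOf i < ℓ - 1 := by omega
        rw [Finset.mem_sup]
        refine ⟨⟨(A ∪ B).toList.idxOf i, hlt'⟩, Finset.mem_univ _, ?_⟩
        have hg : (A ∪ B).toList.getD ((A ∪ B).toList.idxOf i) i0 = i := by
          rw [List.getD_eq_getElem _ _ hlt]
          exact List.getElem_idxOf hlt
        show x ∈ S ((A ∪ B).toList.getD ((A ∪ B).toList.idxOf i) i0)
        rw [hg]; exact hxi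
    · have h1 : coverNum m ℓ S Xᶜ = max ℓ d := coverNum_not_covered hXc
      omega
  · have h1 : coverNum m ℓ S X = max ℓ d := coverNum_not_covered hX
    omega

lemma coverNum_empty : coverNum m ℓ S ∅ = 0 := by
  have h : coverNum m ℓ S ∅ ≤ (∅ : Finset (Fin d)).card :=
    coverNum_le_card (by simp)
  simpa using h

lemma vSl_eq (hm : 0 < m) (hS : Sparse m ℓ S) (X : Finset (Fin m)) :
    vSl m ℓ S X = min (coverNum m ℓ S X : ℝ)
      (max ((ℓ : ℝ) - (coverNum m ℓ S Xᶜ : ℝ)) ((ℓ : ℝ) / 2)) := by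
  have hsp : (ℓ : ℝ) ≤ (coverNum m ℓ S X : ℝ) + (coverNum m ℓ S Xᶜ : ℝ) := by
    exact_mod_cast Nat.cast_le.2 (sparse_bound hm hS X)
  rw [vSl]
  split_ifs with h1 h2
  · rw [max_eq_right (by linarith), min_eq_left (by linarith)]
  · rw [max_eq_left (by linarith), min_eq_right (by linarith)]
  · rw [max_eq_right (by linarith), min_eq_right (by linarith)]

end

/-- For an `ℓ`-sparse finite collection `S` of bundles of `Fin m`, the valuation `v_S^ℓ` is
normalized, monotone, and subadditive. -/
theorem vSl_normalized_monotone_subadditive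
    (m ℓ d : ℕ) (hm : 0 < m) (hℓ : 0 < ℓ)
    (S : Fin d → Finset (Fin m)) (hS : Sparse m ℓ S) :
    vSl m ℓ S ∅ = 0 ∧
    (∀ X Y : Finset (Fin m), X ⊆ Y → vSl m ℓ S X ≤ vSl m ℓ S Y) ∧
    (∀ X Y : Finset (Fin m), vSl m ℓ S (X ∪ Y) ≤ vSl m ℓ S X + vSl m ℓ S Y) := by
  have hl1 : (1 : ℝ) ≤ (ℓ : ℝ) := by exact_mod_cast hℓ
  refine ⟨?_, ?_, ?_⟩
  · rw [vSl, coverNum_empty]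
    rw [if_pos (by push_cast; linarith)]
    simp
  · intro X Y hXY
    rw [vSl_eq hm hS, vSl_eq hm hS]
    have h1 : (coverNum m ℓ S X : ℝ) ≤ (coverNum m ℓ S Y : ℝ) :=
      Nat.cast_le.2 (coverNum_mono hXY)
    have h2 : (coverNum m ℓ S Yᶜ : ℝ) ≤ (coverNum m ℓ S Xᶜ : ℝ) :=
      Nat.cast_le.2 (coverNum_mono (Finset.compl_subset_compl.2 hXY))
    exact min_le_min h1 (max_le_max (by linarith) le_rfl)
  · intro X Y
    rw [vSl_eq hm hS, vSl_eq hm hS, vSl_eq hm hS]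
    apply key_arith
    · linarith
    · exact Nat.cast_nonneg _
    · exact Nat.cast_nonneg _
    · exact Nat.cast_nonneg _
    · exact_mod_cast sparse_bound hm hS X
    · exact_mod_cast sparse_bound hm hS Y
    · exact_mod_cast coverNum_union_le (le_refl (X ∪ Y))
    · have h : Xᶜ ⊆ (X ∪ Y)ᶜ ∪ Y := by
        intro x hx
        simp only [Finset.mem_union, Finset.mem_compl] at *
        tauto
      exact_mod_cast coverNum_union_le h
    · have h : Yᶜ ⊆ (X ∪ Y)ᶜ ∪ X := by
        intro x hx
        simp only [Finset.mem_union, Finset.mem_compl] at *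
        tauto
      exact_mod_cast coverNum_union_le h
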